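/- For 0 < r < 1, the operator h₃ := ∂ρ/∂φ − (1/2)(ρL₃ + L₃ρ) equals h₃ᵣ(r) · [[0, i·sinθ·e^{-iφ}],[-i·sinθ·e^{iφ}, 0]], where h₃ᵣ(r) = (6r − 4r³ + 3(1-r²)·log((1-r)/(1+r)))/(8r²). -/
import Mathlib


open Real Matrix

noncomputable def rho (r θ φ : ℝ) : Matrix (Fin 2) (Fin 2) ℂ :=
  (1 / 2 : ℂ) •
    !![(1 + r * Real.cos θ : ℂ), r * Complex.exp (-Complex.I * φ) * Real.sin θ;
       r * Complex.exp (Complex.I * φ) * Real.sin θ, (1 - r * Real.cos θ : ℂ)]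

noncomputable def L3 (r θ φ : ℝ) : Matrix (Fin 2) (Fin 2) ℂ :=
  ((3 / (4 * r ^ 2) * (2 * r + (1 - r ^ 2) * Real.log ((1 - r) / (1 + r))) : ℝ) : ℂ) •
    !![0, -Complex.I * Complex.exp (-Complex.I * φ) * Real.sin θ;
       Complex.I * Complex.exp (Complex.I * φ) * Real.sin θ, 0]

/-- Entrywise derivative of `ρ` with respect to `φ`. -/
noncomputable def dRhodPhi (r θ φ : ℝ) : Matrix (Fin 2) (Fin 2) ℂ :=
  Matrix.of fun i j => deriv (fun φ' => rho r θ φ' i j) φ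

noncomputable def h3r (r : ℝ) : ℝ :=
  (6 * r - 4 * r ^ 3 + 3 * (1 - r ^ 2) * Real.log ((1 - r) / (1 + r))) / (8 * r ^ 2)

lemma hasDerivAt_cexp_lin (c : ℂ) (x : ℝ) :
    HasDerivAt (fun t : ℝ => Complex.exp (c * t)) (c * Complex.exp (c * x)) x := by
  simpa [mul_comm] using (((hasDerivAt_id (x : ℂ)).const_mul c).cexp).comp_ofReal

lemma dRhodPhi_eq (r θ φ : ℝ) : dRhodPhi r θ φ =
    !![0, (-Complex.I) * (r * Real.sin θ / 2) * Complex.exp (-Complex.I * φ);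
       Complex.I * (r * Real.sin θ / 2) * Complex.exp (Complex.I * φ), 0] := by
  ext i j
  fin_cases i <;> fin_cases j <;> simp only [dRhodPhi, Matrix.of_apply, Fin.mk_zero, Fin.mk_one]
  · have : (fun φ' : ℝ => rho r θ φ' 0 0) = fun _ => ((1 + r * Real.cos θ : ℂ) / 2) := by
      funext t; simp [rho]; ring
    simp [this]
  · have : (fun φ' : ℝ => rho r θ φ' 0 1) =
        fun t : ℝ => (r * Real.sin θ / 2 : ℂ) * Complex.exp (-Complex.I * t) := by
      funext t; simp [rho]; ring
    rw [this, ((hasDerivAt_cexp_lin (-Complex.I) φ).const_mul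
      ((r : ℂ) * Real.sin θ / 2)).deriv]
    simp; ring
  · have : (fun φ' : ℝ => rho r θ φ' 1 0) =
        fun t : ℝ => (r * Real.sin θ / 2 : ℂ) * Complex.exp (Complex.I * t) := by
      funext t; simp [rho]; ring
    rw [this, ((hasDerivAt_cexp_lin (Complex.I) φ).const_mul
      ((r : ℂ) * Real.sin θ / 2)).deriv]
    simp; ring
  · have : (fun φ' : ℝ => rho r θ φ' 1 1) = fun _ => ((1 - r * Real.cos θ : ℂ) / 2) := by
      funext t; simp [rho]; ring
    simp [this]

theorem h3_formula (r θ φ : ℝ) (hr : 0 < r) (hr1 : r < 1) :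
    dRhodPhi r θ φ - (1 / 2 : ℂ) • (rho r θ φ * L3 r θ φ + L3 r θ φ * rho r θ φ) =
      ((h3r r : ℝ) : ℂ) •
        !![0, Complex.I * Real.sin θ * Complex.exp (-Complex.I * φ);
           -Complex.I * Real.sin θ * Complex.exp (Complex.I * φ), 0] := by
  have hr0 : r ≠ 0 := hr.ne'
  have hkeyR : h3r r =
      ((3 / (4 * r ^ 2) * (2 * r + (1 - r ^ 2) * Real.log ((1 - r) / (1 + r))) : ℝ) - r) / 2 := by
    rw [h3r]; field_simp; ring
  have hkey : ((h3r r : ℝ) : ℂ) =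
      (((3 / (4 * r ^ 2) * (2 * r + (1 - r ^ 2) * Real.log ((1 - r) / (1 + r))) : ℝ) : ℂ) - r) / 2 := by
    rw [hkeyR]; push_cast; ring
  rw [dRhodPhi_eq, hkey, L3]
  generalize ((3 / (4 * r ^ 2) * (2 * r + (1 - r ^ 2) * Real.log ((1 - r) / (1 + r)) : ℝ) : ℂ)) = z
  ext i j
  fin_cases i <;> fin_cases j <;>
    · simp [rho, Matrix.mul_apply, Fin.sum_univ_two]
      ring
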